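/- Let m ≥ 3 be an integer and let A(m) be the dihedral Artin group on generators s, t. Then for all integers p and q, one has t·s^p ≠ s·t^q in A(m). -/

import Mathlib

/-- The alternating product `x y x y ⋯` of length `m`. -/
def altElt {M : Type*} [Monoid M] (x y : M) (m : ℕ) : M :=
  ((List.range m).map (fun i => if i % 2 = 0 then x else y)).prod

/-- The single relation `Π(s,t;m) = Π(t,s;m)` of the dihedral Artin group, on the
two-element generating set `Bool`, where `s = false` and `t = true`. -/
def dihedralArtinRels (m : ℕ) : Set (FreeGroup Bool) :=
  {altElt (FreeGroup.of false) (FreeGroup.of true) m *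
    (altElt (FreeGroup.of true) (FreeGroup.of false) m)⁻¹}

/-- The dihedral Artin group `A(m) = ⟨s, t ∣ Π(s,t;m) = Π(t,s;m)⟩`. -/
abbrev DihedralArtinGroup (m : ℕ) := PresentedGroup (dihedralArtinRels m)

/-- The generator `s` of the dihedral Artin group. -/
def DihedralArtinGroup.s (m : ℕ) : DihedralArtinGroup m := PresentedGroup.of false

/-- The generator `t` of the dihedral Artin group. -/
def DihedralArtinGroup.t (m : ℕ) : DihedralArtinGroup m := PresentedGroup.of true

lemma altElt_succ {M : Type*} [Monoid M] (x y : M) (n : ℕ) :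
    altElt x y (n+1) = altElt x y n * (if n % 2 = 0 then x else y) := by
  simp [altElt, List.range_succ]

lemma map_altElt {M N : Type*} [Monoid M] [Monoid N] (φ : M →* N) (x y : M) (m : ℕ) :
    φ (altElt x y m) = altElt (φ x) (φ y) m := by
  simp [altElt, map_list_prod, List.map_map, Function.comp_def, apply_ite φ]

open DihedralGroup in
lemma altElt_sr (m : ℕ) (k : ℕ) :
    altElt (sr 0 : DihedralGroup m) (sr 1) (2*k) = r (k : ZMod m) ∧
    altElt (sr 1 : DihedralGroup m) (sr 0) (2*k) = r (-(k : ZMod m)) := by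
  induction k with
  | zero => simp [altElt]
  | succ k ih =>
    have h1 : 2*(k+1) = (2*k) + 1 + 1 := by ring
    rw [h1, altElt_succ, altElt_succ, altElt_succ, altElt_succ, ih.1, ih.2]
    have : (2*k) % 2 = 0 := by omega
    have h2 : (2*k+1) % 2 = 1 := by omega
    simp [this, h2, r_mul_sr, sr_mul_sr]
    constructor <;> ring

open DihedralGroup in
lemma altElt_eq (m : ℕ) :
    altElt (sr 0 : DihedralGroup m) (sr 1) m = altElt (sr 1 : DihedralGroup m) (sr 0) m := by
  rcases Nat.even_or_odd m with h | h
  · obtain ⟨k, hk⟩ := h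
    have hk' : m = 2*k := by omega
    clear hk; subst hk'
    rw [(altElt_sr _ k).1, (altElt_sr _ k).2]
    congr 1
    have : ((2*k : ℕ) : ZMod (2*k)) = 0 := ZMod.natCast_self _
    push_cast at this
    linear_combination this
  · obtain ⟨k, hk⟩ := h
    subst hk
    rw [altElt_succ, altElt_succ, (altElt_sr _ k).1, (altElt_sr _ k).2]
    have h0 : (2*k) % 2 = 0 := by omega
    simp [h0, r_mul_sr]
    have : ((2*k+1 : ℕ) : ZMod (2*k+1)) = 0 := ZMod.natCast_self _
    push_cast at this
    linear_combination -this

open DihedralGroup in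
/-- The Coxeter quotient map `A(m) → D_m`. -/
noncomputable def coxMap (m : ℕ) : DihedralArtinGroup m →* DihedralGroup m :=
  PresentedGroup.toGroup (f := fun b => if b then sr 1 else sr 0)
    (by
      intro x hx
      rw [dihedralArtinRels, Set.mem_singleton_iff] at hx
      subst hx
      simp only [map_mul, map_inv, map_altElt, FreeGroup.lift_apply_of, if_pos, if_neg,
        Bool.false_eq_true, if_false, if_true]
      rw [altElt_eq]
      simp)

open DihedralGroup in
lemma coxMap_s (m : ℕ) : coxMap m (DihedralArtinGroup.s m) = sr 0 := by
  simp [coxMap, DihedralArtinGroup.s, PresentedGroup.toGroup.of]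

open DihedralGroup in
lemma coxMap_t (m : ℕ) : coxMap m (DihedralArtinGroup.t m) = sr 1 := by
  simp [coxMap, DihedralArtinGroup.t, PresentedGroup.toGroup.of]

open DihedralGroup in
lemma sr_zpow (m : ℕ) (i : ZMod m) (p : ℤ) :
    (sr i : DihedralGroup m) ^ p = 1 ∨ (sr i : DihedralGroup m) ^ p = sr i := by
  have hsq : (sr i : DihedralGroup m) ^ (2:ℤ) = 1 := by
    rw [zpow_two]; simp [sr_mul_sr]
  rcases Int.even_or_odd p with ⟨k, hk⟩ | ⟨k, hk⟩
  · left; subst hk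
    rw [show k + k = 2*k by ring, zpow_mul, hsq, one_zpow]
  · right; subst hk
    rw [zpow_add, zpow_mul, hsq, one_zpow, one_mul, zpow_one]

theorem dihedralArtin_no_square (m : ℕ) (hm : 3 ≤ m) :
    ∀ p q : ℤ,
      DihedralArtinGroup.t m * (DihedralArtinGroup.s m) ^ p ≠
        DihedralArtinGroup.s m * (DihedralArtinGroup.t m) ^ q := by
  intro p q h
  have h2 := congrArg (coxMap m) h
  simp only [map_mul, map_zpow, coxMap_s, coxMap_t] at h2
  have h1 : (1 : ZMod m) ≠ 0 := by
    have : (1 : ℕ) < m := by omega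
    haveI : Fact (1 < m) := ⟨this⟩
    exact one_ne_zero
  have hne : (1 : ZMod m) ≠ -1 := by
    intro hc
    have : ((2:ℕ) : ZMod m) = 0 := by push_cast; linear_combination hc
    rw [ZMod.natCast_eq_zero_iff] at this
    have := Nat.le_of_dvd (by norm_num) this
    omega
  rcases sr_zpow m 0 p with hp | hp <;> rcases sr_zpow m 1 q with hq | hq <;>
    rw [hp, hq] at h2 <;>
    simp [DihedralGroup.sr_mul_sr, mul_one] at h2
  · exact h1 h2
  · exact hne (by linear_combination -h2)
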